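/- Let a, b > 0. There exists a constant C > 0 such that for all δ ∈ (0,1), the Lebesgue measure of the set {(x,y) ∈ [-δ^{1/3}, δ^{1/3}]² : |a·x² - b·y²| ≤ δ} is at least -C·δ·log(δ). -/

import Mathlib

open MeasureTheory

set_option maxHeartbeats 1000000 in
theorem volume_lower_bound_difference_of_squares (a b : ℝ) (ha : 0 < a) (hb : 0 < b) :
    ∃ C > (0:ℝ), ∀ δ : ℝ, δ ∈ Set.Ioo (0:ℝ) 1 →
      ENNReal.ofReal (-C * δ * Real.log δ) ≤
        volume {p : ℝ × ℝ | p.1 ∈ Set.Icc (-(δ ^ ((1:ℝ)/3))) (δ ^ ((1:ℝ)/3)) ∧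
          p.2 ∈ Set.Icc (-(δ ^ ((1:ℝ)/3))) (δ ^ ((1:ℝ)/3)) ∧
          |a * p.1 ^ 2 - b * p.2 ^ 2| ≤ δ} := by
  set c₁ : ℝ := max 1 (Real.sqrt a)⁻¹ with hc₁def
  set c₂ : ℝ := min 1 (Real.sqrt (b/(2*a))) with hc₂def
  have hc₁ : (0:ℝ) < c₁ := lt_of_lt_of_le one_pos (le_max_left _ _)
  have hc₁1 : (1:ℝ) ≤ c₁ := le_max_left _ _
  have hc₂ : (0:ℝ) < c₂ := lt_min one_pos (Real.sqrt_pos.mpr (by positivity))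
  have hc₂1 : c₂ ≤ 1 := min_le_left _ _
  set q : ℝ := c₂ / c₁ with hqdef
  have hq0 : 0 < q := div_pos hc₂ hc₁
  have hq1 : q ≤ 1 := by
    rw [hqdef, div_le_one hc₁]; exact le_trans hc₂1 hc₁1
  set E : ℝ := 2 * b * Real.sqrt (2*a/b) with hEdef
  have hE : 0 < E := by
    have : 0 < Real.sqrt (2*a/b) := Real.sqrt_pos.mpr (by positivity)
    positivity
  set δ₀ : ℝ := min (min ((b/2) ^ (3:ℝ)) (q ^ (12:ℝ))) (1/2) with hδ₀def
  have hδ₀pos : 0 < δ₀ :=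
    lt_min (lt_min (Real.rpow_pos_of_pos (by positivity) _) (Real.rpow_pos_of_pos hq0 _))
      (by norm_num)
  have hδ₀lt1 : δ₀ < 1 := lt_of_le_of_lt (min_le_right _ _) (by norm_num)
  set L : ℝ := -Real.log δ₀ with hLdef
  have hL : 0 < L := by
    have := Real.log_neg hδ₀pos hδ₀lt1; rw [hLdef]; linarith
  set m : ℝ := min 1 (Real.sqrt (a+b))⁻¹ with hmdef
  have hm : 0 < m := lt_min one_pos (by positivity)
  have hm1 : m ≤ 1 := min_le_left _ _
  set C : ℝ := min (1/(12*E)) ((4*m^2)/L) with hCdef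
  have hCpos : 0 < C := lt_min (by positivity) (by positivity)
  refine ⟨C, hCpos, ?_⟩
  intro δ hδ
  obtain ⟨hδ0, hδ1⟩ := hδ
  have hlogδ : Real.log δ < 0 := Real.log_neg hδ0 hδ1
  have hrp3 : (0:ℝ) ≤ δ ^ ((1:ℝ)/3) := Real.rpow_nonneg hδ0.le _
  rcases le_total δ δ₀ with hcase | hcase
  · -- small δ: region between hyperbola branches
    have hδq : δ ≤ q ^ (12:ℝ) := le_trans hcase (le_trans (min_le_left _ _) (min_le_right _ _))
    have hδb : δ ≤ (b/2) ^ (3:ℝ) := le_trans hcase (le_trans (min_le_left _ _) (min_le_left _ _))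
    set α' : ℝ := c₁ * δ ^ ((1:ℝ)/2) with hαdef
    set β' : ℝ := c₂ * δ ^ ((1:ℝ)/3) with hβdef
    have hrpow2 : (δ ^ ((1:ℝ)/2))^2 = δ := by
      rw [← Real.rpow_natCast (δ ^ ((1:ℝ)/2)) 2, ← Real.rpow_mul hδ0.le]; norm_num
    have hrpow3 : (δ ^ ((1:ℝ)/3))^2 = δ ^ ((2:ℝ)/3) := by
      rw [← Real.rpow_natCast (δ ^ ((1:ℝ)/3)) 2, ← Real.rpow_mul hδ0.le]; norm_num
    have hα0 : 0 < α' := by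
      have : 0 < δ ^ ((1:ℝ)/2) := Real.rpow_pos_of_pos hδ0 _
      positivity
    have hβ0 : 0 < β' := by
      have : 0 < δ ^ ((1:ℝ)/3) := Real.rpow_pos_of_pos hδ0 _
      positivity
    have hαβ : α' ≤ β' := by
      have h6 : δ ^ ((1:ℝ)/6) ≤ q := by
        have h1 : δ ^ ((1:ℝ)/6) ≤ (q ^ (12:ℝ)) ^ ((1:ℝ)/6) :=
          Real.rpow_le_rpow hδ0.le hδq (by norm_num)
        have h2 : (q ^ (12:ℝ)) ^ ((1:ℝ)/6) = q ^ (2:ℝ) := by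
          rw [← Real.rpow_mul hq0.le]; norm_num
        have h3 : q ^ (2:ℝ) ≤ q ^ (1:ℝ) :=
          Real.rpow_le_rpow_of_exponent_ge hq0 hq1 (by norm_num)
        rw [Real.rpow_one] at h3
        linarith [h1, h2.le, h2.ge]
      have hsplit : δ ^ ((1:ℝ)/2) = δ ^ ((1:ℝ)/3) * δ ^ ((1:ℝ)/6) := by
        rw [← Real.rpow_add hδ0]; norm_num
      have hkey : c₁ * δ ^ ((1:ℝ)/6) ≤ c₂ := by
        have h7 := mul_le_mul_of_nonneg_left h6 hc₁.le
        have h8 : c₁ * q = c₂ := by rw [hqdef]; field_simp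
        linarith
      rw [hαdef, hβdef, hsplit]
      calc c₁ * (δ ^ ((1:ℝ)/3) * δ ^ ((1:ℝ)/6))
          = (c₁ * δ ^ ((1:ℝ)/6)) * δ ^ ((1:ℝ)/3) := by ring
        _ ≤ c₂ * δ ^ ((1:ℝ)/3) :=
            mul_le_mul_of_nonneg_right hkey (Real.rpow_nonneg hδ0.le _)
    have hβle : β' ≤ δ ^ ((1:ℝ)/3) := by
      rw [hβdef]
      calc c₂ * δ ^ ((1:ℝ)/3) ≤ 1 * δ ^ ((1:ℝ)/3) := mul_le_mul_of_nonneg_right hc₂1 hrp3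
        _ = δ ^ ((1:ℝ)/3) := one_mul _
    set f : ℝ → ℝ := fun x => Real.sqrt (a/b) * x with hfdef
    set g : ℝ → ℝ := fun x => Real.sqrt ((a*x^2+δ)/b) with hgdef
    have hxlb : ∀ x ∈ Set.Icc α' β', 0 < x := fun x hx => lt_of_lt_of_le hα0 hx.1
    have hax : ∀ x ∈ Set.Icc α' β', δ ≤ a * x^2 := by
      intro x hx
      have hx0 := hxlb x hx
      have h1 : α'^2 ≤ x^2 := pow_le_pow_left₀ hα0.le hx.1 2
      have h2 : α'^2 = c₁^2 * δ := by rw [hαdef, mul_pow, hrpow2]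
      have h3 : 1 ≤ a * c₁^2 := by
        have h4 : (Real.sqrt a)⁻¹ ≤ c₁ := le_max_right _ _
        have h5 : ((Real.sqrt a)⁻¹)^2 = a⁻¹ := by
          rw [← Real.sqrt_inv, Real.sq_sqrt (by positivity)]
        have h6 : a⁻¹ ≤ c₁^2 := by
          rw [← h5]; exact pow_le_pow_left₀ (by positivity) h4 2
        have h7 : a * a⁻¹ = 1 := mul_inv_cancel₀ ha.ne'
        have h8 := mul_le_mul_of_nonneg_left h6 ha.le
        linarith
      have h8 := mul_le_mul_of_nonneg_left h1 ha.le
      have h9 : a * α'^2 = (a*c₁^2)*δ := by rw [h2]; ring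
      have h10 : δ ≤ (a*c₁^2)*δ := le_mul_of_one_le_left hδ0.le h3
      linarith
    have hfeq : ∀ x ∈ Set.Icc α' β', f x = Real.sqrt (a*x^2/b) := by
      intro x hx
      rw [hfdef]
      rw [show a*x^2/b = (a/b)*x^2 by ring, Real.sqrt_mul (by positivity) _,
        Real.sqrt_sq (hxlb x hx).le]
    have hfsq : ∀ x ∈ Set.Icc α' β', (f x)^2 = a*x^2/b := by
      intro x hx
      rw [hfeq x hx, Real.sq_sqrt (by positivity)]
    have hgsq : ∀ x : ℝ, (g x)^2 = (a*x^2+δ)/b := by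
      intro x
      rw [hgdef]
      exact Real.sq_sqrt (by positivity)
    have hfg : ∀ x ∈ Set.Icc α' β', f x ≤ g x := by
      intro x hx
      rw [hfeq x hx, hgdef]
      apply Real.sqrt_le_sqrt
      gcongr
      linarith
    have hgle : ∀ x ∈ Set.Icc α' β', g x ≤ δ ^ ((1:ℝ)/3) := by
      intro x hx
      have hx0 := hxlb x hx
      have hx2 : x^2 ≤ β'^2 := pow_le_pow_left₀ hx0.le hx.2 2
      have hβ2 : β'^2 = c₂^2 * δ^((2:ℝ)/3) := by rw [hβdef, mul_pow, hrpow3]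
      have hc₂2 : a * c₂^2 ≤ b/2 := by
        have h4 : c₂ ≤ Real.sqrt (b/(2*a)) := min_le_right _ _
        have h5 : (Real.sqrt (b/(2*a)))^2 = b/(2*a) := Real.sq_sqrt (by positivity)
        have h6 : c₂^2 ≤ b/(2*a) := by
          rw [← h5]; exact pow_le_pow_left₀ hc₂.le h4 2
        have h7 : a * (b/(2*a)) = b/2 := by field_simp
        have h8 := mul_le_mul_of_nonneg_left h6 ha.le
        linarith
      have h23 : (0:ℝ) ≤ δ^((2:ℝ)/3) := Real.rpow_nonneg hδ0.le _
      have hδ23 : δ ≤ (b/2) * δ^((2:ℝ)/3) := by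
        have h1 : δ^((1:ℝ)/3) ≤ b/2 := by
          have h1' := Real.rpow_le_rpow hδ0.le hδb (by norm_num : (0:ℝ) ≤ 1/3)
          rwa [← Real.rpow_mul (by positivity : (0:ℝ) ≤ b/2),
            show (3:ℝ)*(1/3) = 1 by norm_num, Real.rpow_one] at h1'
        have h2 : δ = δ^((1:ℝ)/3) * δ^((2:ℝ)/3) := by
          rw [← Real.rpow_add hδ0]; norm_num
        have h3 := mul_le_mul_of_nonneg_right h1 h23
        linarith
      have hnum : (a*x^2+δ)/b ≤ δ^((2:ℝ)/3) := by
        rw [div_le_iff₀ hb]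
        have hA := mul_le_mul_of_nonneg_left hx2 ha.le
        have hB : a*β'^2 = (a*c₂^2)*δ^((2:ℝ)/3) := by rw [hβ2]; ring
        have hCq := mul_le_mul_of_nonneg_right hc₂2 h23
        linarith
      rw [hgdef]
      calc Real.sqrt ((a*x^2+δ)/b) ≤ Real.sqrt (δ^((2:ℝ)/3)) := Real.sqrt_le_sqrt hnum
        _ = δ^((1:ℝ)/3) := by rw [← hrpow3, Real.sqrt_sq hrp3]
    have hlow : ∀ x ∈ Set.Icc α' β', δ/E * x⁻¹ ≤ g x - f x := by
      intro x hx
      have hx0 := hxlb x hx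
      have haxx := hax x hx
      have hg0 : 0 < g x := by
        rw [hgdef]; exact Real.sqrt_pos.mpr (by positivity)
      have hf0 : 0 ≤ f x := by
        rw [hfdef]; exact mul_nonneg (Real.sqrt_nonneg _) hx0.le
      have hsum : 0 < g x + f x := by linarith
      have hkey : (g x - f x) * (g x + f x) = δ/b := by
        have h1 := hgsq x
        have h2 := hfsq x hx
        have h3 : (g x - f x)*(g x + f x) = (g x)^2 - (f x)^2 := by ring
        rw [h3, h1, h2]
        field_simp
        ring
      have hs0 : 0 < Real.sqrt (2*a/b) := Real.sqrt_pos.mpr (by positivity)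
      have hgub : g x ≤ Real.sqrt (2*a/b) * x := by
        have h1 : (a*x^2+δ)/b ≤ (2*a/b) * x^2 := by
          rw [show (2*a/b) * x^2 = (2*a*x^2)/b by ring]
          gcongr
          linarith
        rw [hgdef]
        calc Real.sqrt ((a*x^2+δ)/b) ≤ Real.sqrt ((2*a/b)*x^2) := Real.sqrt_le_sqrt h1
          _ = Real.sqrt (2*a/b) * x := by
            rw [Real.sqrt_mul (by positivity), Real.sqrt_sq hx0.le]
      have hfub : f x ≤ Real.sqrt (2*a/b) * x := by
        have hd : Real.sqrt (a/b) ≤ Real.sqrt (2*a/b) := by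
          apply Real.sqrt_le_sqrt
          have : 0 ≤ a/b := by positivity
          calc a/b ≤ 2*(a/b) := by linarith
            _ = 2*a/b := by ring
        rw [hfdef]
        exact mul_le_mul_of_nonneg_right hd hx0.le
      have hsum_ub : g x + f x ≤ 2*Real.sqrt (2*a/b)*x := by linarith
      have h4 : g x - f x = (δ/b) / (g x + f x) := (eq_div_iff hsum.ne').mpr hkey
      have h5 : δ/E * x⁻¹ = (δ/b) / (2*Real.sqrt (2*a/b)*x) := by
        rw [hEdef]
        field_simp
      rw [h4, h5]
      apply div_le_div_of_nonneg_left (by positivity) hsum hsum_ub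
    have hmeas : MeasurableSet (Set.Icc α' β') := measurableSet_Icc
    have hif : IntegrableOn f (Set.Icc α' β') := by
      apply ContinuousOn.integrableOn_Icc
      rw [hfdef]; fun_prop
    have hig : IntegrableOn g (Set.Icc α' β') := by
      apply ContinuousOn.integrableOn_Icc
      rw [hgdef]; fun_prop
    have hilow : IntegrableOn (fun x : ℝ => δ/E * x⁻¹) (Set.Icc α' β') := by
      apply ContinuousOn.integrableOn_Icc
      apply ContinuousOn.mul continuousOn_const
      exact ContinuousOn.inv₀ continuousOn_id (fun x hx => (hxlb x hx).ne')
    have hreg : volume (regionBetween f g (Set.Icc α' β')) =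
        ENNReal.ofReal (∫ x in Set.Icc α' β', (g - f) x) := by
      rw [Measure.volume_eq_prod]
      exact volume_regionBetween_eq_integral hif hig hmeas hfg
    have hsub : regionBetween f g (Set.Icc α' β') ⊆
        {p : ℝ × ℝ | p.1 ∈ Set.Icc (-(δ ^ ((1:ℝ)/3))) (δ ^ ((1:ℝ)/3)) ∧
          p.2 ∈ Set.Icc (-(δ ^ ((1:ℝ)/3))) (δ ^ ((1:ℝ)/3)) ∧
          |a * p.1 ^ 2 - b * p.2 ^ 2| ≤ δ} := by
      rintro ⟨x, y⟩ hp
      simp only [regionBetween, Set.mem_setOf_eq] at hp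
      obtain ⟨hx, hy⟩ := hp
      have hx0 := hxlb x hx
      have hfx0 : 0 ≤ f x := by
        rw [hfdef]; exact mul_nonneg (Real.sqrt_nonneg _) hx0.le
      have hy0 : 0 ≤ y := le_trans hfx0 hy.1.le
      have hgley := hgle x hx
      have hby1 : a*x^2 ≤ b*y^2 := by
        have h1 : (f x)^2 ≤ y^2 := pow_le_pow_left₀ hfx0 hy.1.le 2
        have h2 := hfsq x hx
        have h3 : b * (a*x^2/b) = a*x^2 := by field_simp
        have h4 := mul_le_mul_of_nonneg_left h1 hb.le
        rw [h2] at h4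
        linarith
      have hby2 : b*y^2 ≤ a*x^2 + δ := by
        have h1 : y^2 ≤ (g x)^2 := pow_le_pow_left₀ hy0 hy.2.le 2
        have h2 := hgsq x
        have h3 : b * ((a*x^2+δ)/b) = a*x^2+δ := by field_simp
        have h4 := mul_le_mul_of_nonneg_left h1 hb.le
        rw [h2] at h4
        linarith
      refine ⟨⟨by linarith [hx.1], le_trans hx.2 hβle⟩,
        ⟨by linarith [hy.1], le_trans hy.2.le hgley⟩, ?_⟩
      rw [abs_le]
      constructor <;> simp only [] <;> linarith [hδ0.le, hby1, hby2]
    have hmono : (∫ x in Set.Icc α' β', (δ/E * x⁻¹)) ≤ ∫ x in Set.Icc α' β', (g - f) x := by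
      apply setIntegral_mono_on hilow (hig.sub hif) hmeas
      intro x hx
      simpa using hlow x hx
    have hint : (∫ x in Set.Icc α' β', (δ/E * x⁻¹)) = δ/E * (Real.log β' - Real.log α') := by
      rw [MeasureTheory.integral_Icc_eq_integral_Ioc, ← intervalIntegral.integral_of_le hαβ,
        intervalIntegral.integral_const_mul, integral_inv_of_pos hα0 hβ0,
        Real.log_div hβ0.ne' hα0.ne']
    have hlog : -(1:ℝ)/12 * Real.log δ ≤ Real.log β' - Real.log α' := by
      have hlogα : Real.log α' = Real.log c₁ + (1/2)*Real.log δ := by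
        rw [hαdef, Real.log_mul hc₁.ne' (Real.rpow_pos_of_pos hδ0 _).ne', Real.log_rpow hδ0]
      have hlogβ : Real.log β' = Real.log c₂ + (1/3)*Real.log δ := by
        rw [hβdef, Real.log_mul hc₂.ne' (Real.rpow_pos_of_pos hδ0 _).ne', Real.log_rpow hδ0]
      have hlogq : Real.log δ ≤ 12 * (Real.log c₂ - Real.log c₁) := by
        have h1 : Real.log δ ≤ Real.log (q^(12:ℝ)) :=
          Real.log_le_log hδ0 hδq
        rw [Real.log_rpow hq0, hqdef, Real.log_div hc₂.ne' hc₁.ne'] at h1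
        linarith
      linarith
    have hfinal : -C*δ*Real.log δ ≤ ∫ x in Set.Icc α' β', (g - f) x := by
      have hC1 : C ≤ 1/(12*E) := min_le_left _ _
      have hnl : 0 ≤ -Real.log δ := by linarith
      have hstep : -C*δ*Real.log δ ≤ δ/E * (-(1:ℝ)/12 * Real.log δ) := by
        have h1 : C * (-Real.log δ) ≤ (1/(12*E)) * (-Real.log δ) :=
          mul_le_mul_of_nonneg_right hC1 hnl
        have h2 : δ/E * (-(1:ℝ)/12 * Real.log δ) = ((1/(12*E)) * (-Real.log δ)) * δ := by
          field_simp
        have h3 : -C*δ*Real.log δ = (C * (-Real.log δ)) * δ := by ring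
        rw [h2, h3]
        exact mul_le_mul_of_nonneg_right h1 hδ0.le
      have hstep2 : δ/E * (-(1:ℝ)/12 * Real.log δ) ≤ δ/E * (Real.log β' - Real.log α') :=
        mul_le_mul_of_nonneg_left hlog (by positivity)
      linarith
    calc ENNReal.ofReal (-C*δ*Real.log δ)
        ≤ ENNReal.ofReal (∫ x in Set.Icc α' β', (g - f) x) :=
          ENNReal.ofReal_le_ofReal hfinal
      _ = volume (regionBetween f g (Set.Icc α' β')) := hreg.symm
      _ ≤ _ := measure_mono hsub
  · -- large δ: box at the origin
    set r : ℝ := m * Real.sqrt δ with hrdef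
    have hsδ : Real.sqrt δ ^ 2 = δ := Real.sq_sqrt hδ0.le
    have hr : 0 < r := by
      have : 0 < Real.sqrt δ := Real.sqrt_pos.mpr hδ0
      positivity
    have hr3 : r ≤ δ ^ ((1:ℝ)/3) := by
      have h1 : Real.sqrt δ = δ ^ ((1:ℝ)/2) := by
        rw [Real.sqrt_eq_rpow]
      have h2 : δ ^ ((1:ℝ)/2) ≤ δ ^ ((1:ℝ)/3) :=
        Real.rpow_le_rpow_of_exponent_ge hδ0 hδ1.le (by norm_num)
      have h3 : r ≤ Real.sqrt δ := mul_le_of_le_one_left (Real.sqrt_nonneg δ) hm1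
      linarith [h1 ▸ h3]
    have hsub : Set.Icc (-r) r ×ˢ Set.Icc (-r) r ⊆
        {p : ℝ × ℝ | p.1 ∈ Set.Icc (-(δ ^ ((1:ℝ)/3))) (δ ^ ((1:ℝ)/3)) ∧
          p.2 ∈ Set.Icc (-(δ ^ ((1:ℝ)/3))) (δ ^ ((1:ℝ)/3)) ∧
          |a * p.1 ^ 2 - b * p.2 ^ 2| ≤ δ} := by
      rintro ⟨x, y⟩ ⟨hx, hy⟩
      have hx2 : x^2 ≤ r^2 := sq_le_sq' hx.1 hx.2
      have hy2 : y^2 ≤ r^2 := sq_le_sq' hy.1 hy.2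
      have hrsq : r^2 = m^2 * δ := by rw [hrdef, mul_pow, hsδ]
      have hm2 : (a+b) * m^2 ≤ 1 := by
        have h1 : m ≤ (Real.sqrt (a+b))⁻¹ := min_le_right _ _
        have h2 : ((Real.sqrt (a+b))⁻¹)^2 = (a+b)⁻¹ := by
          rw [← Real.sqrt_inv, Real.sq_sqrt (by positivity)]
        have h3 : m^2 ≤ (a+b)⁻¹ := by
          rw [← h2]; exact pow_le_pow_left₀ hm.le h1 2
        have h4 : (a+b) * (a+b)⁻¹ = 1 := mul_inv_cancel₀ (by positivity : (a+b:ℝ) ≠ 0)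
        have h5 := mul_le_mul_of_nonneg_left h3 (by positivity : (0:ℝ) ≤ a+b)
        linarith
      have habs : |a * x^2 - b * y^2| ≤ δ := by
        have hxa := mul_le_mul_of_nonneg_left hx2 ha.le
        have hyb := mul_le_mul_of_nonneg_left hy2 hb.le
        have h8 : a*r^2 + b*r^2 ≤ δ := by
          calc a*r^2 + b*r^2 = (a+b)*m^2*δ := by rw [hrsq]; ring
            _ ≤ 1*δ := mul_le_mul_of_nonneg_right hm2 hδ0.le
            _ = δ := one_mul δ
        have hax0 : 0 ≤ a*x^2 := by positivity
        have hby0 : 0 ≤ b*y^2 := by positivity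
        rw [abs_le]
        constructor <;> linarith
      exact ⟨⟨by linarith [hx.1], by linarith [hx.2]⟩,
        ⟨by linarith [hy.1], by linarith [hy.2]⟩, habs⟩
    have hvol : volume (Set.Icc (-r) r ×ˢ Set.Icc (-r) r) =
        ENNReal.ofReal (2*r) * ENNReal.ofReal (2*r) := by
      rw [Measure.volume_eq_prod, Measure.prod_prod, Real.volume_Icc,
        show r - -r = 2*r by ring]
    have hfinal : -C*δ*Real.log δ ≤ (2*r)*(2*r) := by
      have h1 : -Real.log δ ≤ L := by
        have := Real.log_le_log hδ₀pos hcase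
        rw [hLdef]; linarith
      have hC2 : C ≤ 4*m^2/L := min_le_right _ _
      have hC2' : C * L ≤ 4*m^2 := (le_div_iff₀ hL).mp hC2
      have h2 : (2*r)*(2*r) = 4*m^2*δ := by
        rw [hrdef]; linear_combination (4*m^2)*hsδ
      have h3 : C * (-Real.log δ) ≤ 4*m^2 := by
        have := mul_le_mul_of_nonneg_left h1 hCpos.le
        linarith
      have h4 : -C*δ*Real.log δ = (C * (-Real.log δ)) * δ := by ring
      rw [h2, h4]
      exact mul_le_mul_of_nonneg_right h3 hδ0.le
    calc ENNReal.ofReal (-C*δ*Real.log δ)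
        ≤ ENNReal.ofReal ((2*r)*(2*r)) := ENNReal.ofReal_le_ofReal hfinal
      _ = ENNReal.ofReal (2*r) * ENNReal.ofReal (2*r) :=
          ENNReal.ofReal_mul (by positivity : (0:ℝ) ≤ 2*r)
      _ = volume (Set.Icc (-r) r ×ˢ Set.Icc (-r) r) := hvol.symm
      _ ≤ _ := measure_mono hsub
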